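/- Let F be a field and let a ∈ F with a ∉ {−1, 0, 1}. Then the diagonal matrix diag(a, a⁻¹) ∈ SL_2(F) is a commutator of unipotent matrices of index 2 if and only if a = b² for some b ∈ F. -/

import Mathlib

open Matrix

variable {F : Type*} [Field F]

/-- A unipotent matrix of index 2: `A ≠ I` and `(A - I)² = 0`. -/
def IsU2 {m : Type*} [Fintype m] [DecidableEq m] (A : Matrix m m F) : Prop :=
  A ≠ 1 ∧ (A - 1) ^ 2 = 0

/-- A commutator `X * Y * X⁻¹ * Y⁻¹` of unipotent matrices of index 2. -/
def IsCommU2 {m : Type*} [Fintype m] [DecidableEq m] (A : Matrix m m F) : Prop :=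
  ∃ X Y : Matrix m m F, IsU2 X ∧ IsU2 Y ∧ A = X * Y * X⁻¹ * Y⁻¹

/-- `A` is a product of at most `k` commutators of unipotent matrices of index 2. -/
def IsProdCommU2 {m : Type*} [Fintype m] [DecidableEq m] (k : ℕ) (A : Matrix m m F) : Prop :=
  ∃ L : List (Matrix m m F), L.length ≤ k ∧ (∀ B ∈ L, IsCommU2 B) ∧ L.prod = A

/-- `A` is a product of at most `k` unipotent matrices of index 2. -/
def IsProdU2 {m : Type*} [Fintype m] [DecidableEq m] (k : ℕ) (A : Matrix m m F) : Prop :=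
  ∃ L : List (Matrix m m F), L.length ≤ k ∧ (∀ B ∈ L, IsU2 B) ∧ L.prod = A

lemma nil_sandwich {F : Type*} [Field F] (N M : Matrix (Fin 2) (Fin 2) F)
    (hN : N * N = 0) : N * M * N = trace (N * M) • N := by
  have e : ∀ i j, (N * N) i j = 0 := fun i j => by rw [hN]; rfl
  have e00 : N 0 0 * N 0 0 + N 0 1 * N 1 0 = 0 := by
    simpa [Matrix.mul_apply, Fin.sum_univ_two] using e 0 0
  have e01 : N 0 0 * N 0 1 + N 0 1 * N 1 1 = 0 := by
    simpa [Matrix.mul_apply, Fin.sum_univ_two] using e 0 1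
  have e10 : N 1 0 * N 0 0 + N 1 1 * N 1 0 = 0 := by
    simpa [Matrix.mul_apply, Fin.sum_univ_two] using e 1 0
  have e11 : N 1 0 * N 0 1 + N 1 1 * N 1 1 = 0 := by
    simpa [Matrix.mul_apply, Fin.sum_univ_two] using e 1 1
  have hs : N 1 1 = - N 0 0 := by
    by_cases h : N 0 0 + N 1 1 = 0
    · linear_combination h
    · exfalso
      have hq : N 0 1 = 0 := by
        rcases mul_eq_zero.mp (show N 0 1 * (N 0 0 + N 1 1) = 0 by linear_combination e01) with h'|h'
        · exact h'
        · exact absurd h' h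
      have hr : N 1 0 = 0 := by
        rcases mul_eq_zero.mp (show N 1 0 * (N 0 0 + N 1 1) = 0 by linear_combination e10) with h'|h'
        · exact h'
        · exact absurd h' h
      have hp : N 0 0 = 0 := by
        have : N 0 0 * N 0 0 = 0 := by linear_combination e00 - N 1 0 * hq
        exact pow_eq_zero_iff (n := 2) (by norm_num) |>.mp (by rw [sq]; exact this)
      have hs' : N 1 1 = 0 := by
        have : N 1 1 * N 1 1 = 0 := by linear_combination e11 - N 0 1 * hr
        exact pow_eq_zero_iff (n := 2) (by norm_num) |>.mp (by rw [sq]; exact this)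
      exact h (by rw [hp, hs', add_zero])
  ext i j
  fin_cases i <;> fin_cases j <;>
    simp [Matrix.mul_apply, Matrix.trace_fin_two, Fin.sum_univ_two, Matrix.smul_apply,
      smul_eq_mul]
  · linear_combination M 1 1 * e00 - N 0 0 * M 1 1 * hs
  · linear_combination (-(M 0 1)) * e00 + N 0 0 * M 0 1 * hs
  · linear_combination (-(M 1 0)) * e00 + N 0 0 * M 1 0 * hs
  · linear_combination M 0 0 * e00 - N 0 0 * M 0 0 * hs

lemma comm_trace {F : Type*} [Field F] (N M : Matrix (Fin 2) (Fin 2) F)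
    (hN : N * N = 0) (hM : M * M = 0) :
    trace ((1 + N) * (1 + M) * (1 - N) * (1 - M)) = 2 + trace (N * M) * trace (N * M) := by
  have expand : (1 + N) * (1 + M) * (1 - N) * (1 - M) =
      1 + N * M - M * N + M * N * M - N * M * N + N * M * N * M
        - M * M - N * N + N * N * M - N * (M * M) := by noncomm_ring
  rw [expand, hN, hM]
  have t1 : trace (M * N * M) = 0 := by
    rw [trace_mul_comm, ← mul_assoc, hM, zero_mul, trace_zero]
  have t2 : trace (N * M * N) = 0 := by
    rw [trace_mul_comm, ← mul_assoc, hN, zero_mul, trace_zero]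
  have t3 : trace (N * M * N * M) = trace (N * M) * trace (N * M) := by
    rw [nil_sandwich N M hN, smul_mul_assoc, trace_smul, smul_eq_mul]
  have t4 : trace (M * N) = trace (N * M) := trace_mul_comm M N
  simp only [zero_mul, mul_zero, sub_zero, add_zero, trace_add, trace_sub, t1, t2, t3, t4,
    trace_one]
  simp only [Fintype.card_fin, Nat.cast_ofNat]
  ring

set_option maxHeartbeats 1600000 in
theorem stmt9 {F : Type*} [Field F] (a : F) (ha1 : a ≠ -1) (ha0 : a ≠ 0) (ha2 : a ≠ 1) :
    IsCommU2 (!![a, 0; 0, a⁻¹] : Matrix (Fin 2) (Fin 2) F) ↔ ∃ b : F, a = b ^ 2 := by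
  constructor
  · rintro ⟨X, Y, ⟨-, hX2⟩, ⟨-, hY2⟩, hA⟩
    obtain ⟨N, rfl⟩ : ∃ N, X = 1 + N := ⟨X - 1, by abel⟩
    obtain ⟨M, rfl⟩ : ∃ M, Y = 1 + M := ⟨Y - 1, by abel⟩
    have hN : N * N = 0 := by
      have := hX2; rw [add_sub_cancel_left, sq] at this; exact this
    have hM : M * M = 0 := by
      have := hY2; rw [add_sub_cancel_left, sq] at this; exact this
    have hXi : (1 + N)⁻¹ = 1 - N := by
      apply Matrix.inv_eq_right_inv
      have h' : (1 + N) * (1 - N) = 1 - N * N := by noncomm_ring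
      rw [h', hN, sub_zero]
    have hYi : (1 + M)⁻¹ = 1 - M := by
      apply Matrix.inv_eq_right_inv
      have h' : (1 + M) * (1 - M) = 1 - M * M := by noncomm_ring
      rw [h', hM, sub_zero]
    rw [hXi, hYi] at hA
    have h := congrArg Matrix.trace hA
    rw [comm_trace N M hN hM, Matrix.trace_fin_two_of] at h
    set c := trace (N * M) with hc
    have hcne : c ≠ 0 := by
      intro h0
      rw [h0] at h
      have h1 : (a - 1) ^ 2 = 0 := by
        field_simp at h
        linear_combination h
      exact ha2 (sub_eq_zero.mp (pow_eq_zero_iff (n := 2) (by norm_num) |>.mp h1))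
    refine ⟨(a - 1) / c, ?_⟩
    field_simp
    field_simp at h
    linear_combination -h
  · rintro ⟨b, rfl⟩
    have hb0 : b ≠ 0 := fun h => ha0 (by rw [h]; ring)
    have hd : b ^ 2 + 1 ≠ 0 := fun h => ha1 (by linear_combination h)
    have hb1 : b ^ 2 - 1 ≠ 0 := fun h => ha2 (by linear_combination h)
    have hz : (0 : Matrix (Fin 2) (Fin 2) F) = !![0,0;0,0] := by
      ext i j; fin_cases i <;> fin_cases j <;> rfl
    refine ⟨!![2*b^2/(b^2+1), b*(b^2-1)/(b^2+1); -((b^2-1)/(b*(b^2+1))), 2/(b^2+1)],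
            !![2/(b^2+1), -((b-1)^2/(b^2+1)); (b+1)^2/(b^2+1), 2*b^2/(b^2+1)],
            ⟨?_, ?_⟩, ⟨?_, ?_⟩, ?_⟩
    · intro h
      have h01 : b * (b^2-1) / (b^2+1) = 0 := by
        have := congrFun (congrFun h 0) 1
        simpa using this
      rw [div_eq_zero_iff] at h01
      rcases h01 with h'|h'
      · rcases mul_eq_zero.mp h' with h''|h''
        · exact hb0 h''
        · exact hb1 h''
      · exact hd h'
    · have hE : (!![2*b^2/(b^2+1), b*(b^2-1)/(b^2+1); -((b^2-1)/(b*(b^2+1))), 2/(b^2+1)]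
          : Matrix (Fin 2) (Fin 2) F) - 1 =
          !![(b^2-1)/(b^2+1), b*(b^2-1)/(b^2+1); -((b^2-1)/(b*(b^2+1))), -((b^2-1)/(b^2+1))] := by
        rw [Matrix.one_fin_two]
        ext i j
        fin_cases i <;> fin_cases j <;> simp only [Fin.zero_eta, Fin.mk_one, Matrix.cons_val',
        Matrix.cons_val_zero, Matrix.cons_val_one, Matrix.head_cons, Matrix.head_fin_const,
        Matrix.empty_val', Matrix.cons_val_fin_one, Matrix.of_apply, Matrix.sub_apply,
        Matrix.zero_apply] <;> field_simp <;> ring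
      rw [hE, sq, Matrix.mul_fin_two, hz]
      ext i j
      fin_cases i <;> fin_cases j <;> simp only [Fin.zero_eta, Fin.mk_one, Matrix.cons_val',
        Matrix.cons_val_zero, Matrix.cons_val_one, Matrix.head_cons, Matrix.head_fin_const,
        Matrix.empty_val', Matrix.cons_val_fin_one, Matrix.of_apply, Matrix.sub_apply,
        Matrix.zero_apply] <;> field_simp <;> ring
    · intro h
      have h10 : (b+1)^2 / (b^2+1) = 0 := by
        have := congrFun (congrFun h 1) 0
        simpa using this
      rw [div_eq_zero_iff] at h10
      rcases h10 with h'|h'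
      · have hb : b + 1 = 0 := pow_eq_zero_iff (n := 2) (by norm_num) |>.mp h'
        exact hb1 (by linear_combination (b - 1) * hb)
      · exact hd h'
    · have hE : (!![2/(b^2+1), -((b-1)^2/(b^2+1)); (b+1)^2/(b^2+1), 2*b^2/(b^2+1)]
          : Matrix (Fin 2) (Fin 2) F) - 1 =
          !![-((b^2-1)/(b^2+1)), -((b-1)^2/(b^2+1)); (b+1)^2/(b^2+1), (b^2-1)/(b^2+1)] := by
        rw [Matrix.one_fin_two]
        ext i j
        fin_cases i <;> fin_cases j <;> simp only [Fin.zero_eta, Fin.mk_one, Matrix.cons_val',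
        Matrix.cons_val_zero, Matrix.cons_val_one, Matrix.head_cons, Matrix.head_fin_const,
        Matrix.empty_val', Matrix.cons_val_fin_one, Matrix.of_apply, Matrix.sub_apply,
        Matrix.zero_apply] <;> field_simp <;> ring
      rw [hE, sq, Matrix.mul_fin_two, hz]
      ext i j
      fin_cases i <;> fin_cases j <;> simp only [Fin.zero_eta, Fin.mk_one, Matrix.cons_val',
        Matrix.cons_val_zero, Matrix.cons_val_one, Matrix.head_cons, Matrix.head_fin_const,
        Matrix.empty_val', Matrix.cons_val_fin_one, Matrix.of_apply, Matrix.sub_apply,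
        Matrix.zero_apply] <;> field_simp <;> ring
    · have hXi : (!![2*b^2/(b^2+1), b*(b^2-1)/(b^2+1); -((b^2-1)/(b*(b^2+1))), 2/(b^2+1)]
          : Matrix (Fin 2) (Fin 2) F)⁻¹ =
          !![2/(b^2+1), -(b*(b^2-1)/(b^2+1)); (b^2-1)/(b*(b^2+1)), 2*b^2/(b^2+1)] := by
        apply Matrix.inv_eq_right_inv
        rw [Matrix.mul_fin_two, Matrix.one_fin_two]
        ext i j
        fin_cases i <;> fin_cases j <;> simp only [Fin.zero_eta, Fin.mk_one, Matrix.cons_val',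
        Matrix.cons_val_zero, Matrix.cons_val_one, Matrix.head_cons, Matrix.head_fin_const,
        Matrix.empty_val', Matrix.cons_val_fin_one, Matrix.of_apply, Matrix.sub_apply,
        Matrix.zero_apply] <;> field_simp <;> ring
      have hYi : (!![2/(b^2+1), -((b-1)^2/(b^2+1)); (b+1)^2/(b^2+1), 2*b^2/(b^2+1)]
          : Matrix (Fin 2) (Fin 2) F)⁻¹ =
          !![2*b^2/(b^2+1), (b-1)^2/(b^2+1); -((b+1)^2/(b^2+1)), 2/(b^2+1)] := by
        apply Matrix.inv_eq_right_inv
        rw [Matrix.mul_fin_two, Matrix.one_fin_two]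
        ext i j
        fin_cases i <;> fin_cases j <;> simp only [Fin.zero_eta, Fin.mk_one, Matrix.cons_val',
        Matrix.cons_val_zero, Matrix.cons_val_one, Matrix.head_cons, Matrix.head_fin_const,
        Matrix.empty_val', Matrix.cons_val_fin_one, Matrix.of_apply, Matrix.sub_apply,
        Matrix.zero_apply] <;> field_simp <;> ring
      have h1 : (!![2*b^2/(b^2+1), b*(b^2-1)/(b^2+1); -((b^2-1)/(b*(b^2+1))), 2/(b^2+1)]
          : Matrix (Fin 2) (Fin 2) F) *
          !![2/(b^2+1), -((b-1)^2/(b^2+1)); (b+1)^2/(b^2+1), 2*b^2/(b^2+1)] =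
          !![b*(b^2+2*b-1)/(b^2+1), 2*b^2*(b-1)/(b^2+1);
             2*(b+1)/(b*(b^2+1)), (b^2+2*b-1)/(b*(b^2+1))] := by
        rw [Matrix.mul_fin_two]
        ext i j
        fin_cases i <;> fin_cases j <;> simp only [Fin.zero_eta, Fin.mk_one, Matrix.cons_val',
          Matrix.cons_val_zero, Matrix.cons_val_one, Matrix.head_cons, Matrix.head_fin_const,
          Matrix.empty_val', Matrix.cons_val_fin_one, Matrix.of_apply] <;> field_simp <;> ring
      have h2 : (!![b*(b^2+2*b-1)/(b^2+1), 2*b^2*(b-1)/(b^2+1);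
             2*(b+1)/(b*(b^2+1)), (b^2+2*b-1)/(b*(b^2+1))] : Matrix (Fin 2) (Fin 2) F) *
          !![2/(b^2+1), -(b*(b^2-1)/(b^2+1)); (b^2-1)/(b*(b^2+1)), 2*b^2/(b^2+1)] =
          !![2*b^2/(b^2+1), -(b^2*(b-1)^2/(b^2+1));
             (b+1)^2/(b^2*(b^2+1)), 2/(b^2+1)] := by
        rw [Matrix.mul_fin_two]
        ext i j
        fin_cases i <;> fin_cases j <;> simp only [Fin.zero_eta, Fin.mk_one, Matrix.cons_val',
          Matrix.cons_val_zero, Matrix.cons_val_one, Matrix.head_cons, Matrix.head_fin_const,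
          Matrix.empty_val', Matrix.cons_val_fin_one, Matrix.of_apply] <;> field_simp <;> ring
      have h3 : (!![2*b^2/(b^2+1), -(b^2*(b-1)^2/(b^2+1));
             (b+1)^2/(b^2*(b^2+1)), 2/(b^2+1)] : Matrix (Fin 2) (Fin 2) F) *
          !![2*b^2/(b^2+1), (b-1)^2/(b^2+1); -((b+1)^2/(b^2+1)), 2/(b^2+1)] =
          !![b^2, 0; 0, (b^2)⁻¹] := by
        rw [Matrix.mul_fin_two]
        ext i j
        fin_cases i <;> fin_cases j <;> simp only [Fin.zero_eta, Fin.mk_one, Matrix.cons_val',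
          Matrix.cons_val_zero, Matrix.cons_val_one, Matrix.head_cons, Matrix.head_fin_const,
          Matrix.empty_val', Matrix.cons_val_fin_one, Matrix.of_apply] <;> field_simp <;> ring
      rw [hXi, hYi, h1, h2, h3]
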